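/- Let G and K be groups and consider G as a subgroup of the free product G ∗ K. Then G is malnormal in G ∗ K: for every z ∈ G ∗ K with z ∉ G, one has zGz⁻¹ ∩ G = {e}. -/

import Mathlib

set_option linter.unusedSectionVars false

open Monoid

namespace Stmt1Aux

variable {ι : Type*} [DecidableEq ι] {G : ι → Type*} [∀ i, Group (G i)] [∀ i, DecidableEq (G i)]

open Monoid.CoprodI Monoid.CoprodI.Word

theorem prod_equiv (z : CoprodI G) : (Word.equiv z).prod = z :=
  Word.equiv.symm_apply_apply z

theorem equiv_prod (w : Word G) : Word.equiv w.prod = w :=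
  Word.equiv.apply_symm_apply w

theorem length_equiv_of (i : ι) (h : G i) :
    (Word.equiv (of h)).toList.length ≤ 1 := by
  by_cases h1 : h = 1
  · subst h1
    rw [map_one]
    have : Word.equiv (1 : CoprodI G) = Word.empty := by
      have := equiv_prod (G := G) Word.empty
      rwa [prod_empty] at this
    simp [this]
  · have : of h = (Word.cons h Word.empty (by simp [fstIdx, empty]) h1).prod := by
      exact ((prod_cons _ _ _ _ _).trans (by rw [prod_empty, mul_one])).symm
    rw [this, equiv_prod]
    simp [Word.cons]

theorem inv_rev_prod (n : List (Σ i, G i)) :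
    (List.map (fun l => of l.2) (n.reverse.map (fun l : Σ i, G i => (⟨l.1, l.2⁻¹⟩ : Σ i, G i)))).prod
      = (List.map (fun l => of l.2) n).prod⁻¹ := by
  induction n with
  | nil => simp
  | cons a t ih =>
    simp only [List.reverse_cons, List.map_append, List.prod_append, ih, List.map_cons,
      List.map_nil, List.prod_cons, List.prod_nil, mul_one, mul_inv_rev]
    rw [← map_inv]


theorem not_of_conj (w : Word G) {i : ι} {l : Σ i, G i} (hl : w.toList.getLast? = some l)
    (hli : l.1 ≠ i) (g : G i) (hg : g ≠ 1) (h : G i)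
    (heq : w.prod * of g * w.prod⁻¹ = of h) : False := by
  have hne : w.toList ≠ [] := by
    intro hx; rw [hx] at hl; simp at hl
  have hW2 : List.IsChain (fun a b : Σ i, G i => a.1 ≠ b.1)
      ((⟨i, g⟩ : Σ i, G i) :: (w.toList.reverse.map fun l : Σ i, G i => ⟨l.1, l.2⁻¹⟩)) := by
    rw [List.isChain_cons]
    constructor
    · intro y hy
      rw [List.head?_map, List.head?_reverse, hl] at hy
      simp only [Option.mem_def, Option.map_some, Option.some.injEq] at hy
      subst hy
      exact fun hc => hli hc.symm
    · rw [List.isChain_map]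
      rw [List.isChain_reverse]
      exact w.chain_ne.imp (fun a b hab => Ne.symm hab)
  let W : Word G :=
    ⟨w.toList ++ (⟨i, g⟩ : Σ i, G i) :: (w.toList.reverse.map fun l : Σ i, G i => ⟨l.1, l.2⁻¹⟩),
     by
      intro x hx
      rcases List.mem_append.mp hx with hx | hx
      · exact w.ne_one x hx
      · rcases List.mem_cons.mp hx with rfl | hx
        · exact hg
        · rcases List.mem_map.mp hx with ⟨y, hy, rfl⟩
          simpa using w.ne_one y (List.mem_reverse.mp hy),
     by
      rw [List.isChain_append]
      refine ⟨w.chain_ne, hW2, ?_⟩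
      intro x hx y hy
      rw [hl] at hx
      simp only [Option.mem_def, Option.some.injEq] at hx
      subst hx
      simp only [List.head?_cons, Option.mem_def, Option.some.injEq] at hy
      subst hy
      exact hli⟩
  have hWprod : W.prod = w.prod * of g * w.prod⁻¹ := by
    show (List.map (fun l : Σ i, G i => of l.2) (w.toList ++ _)).prod = _
    rw [List.map_append, List.prod_append, List.map_cons, List.prod_cons, inv_rev_prod,
      ← mul_assoc]
    rfl
  have hWe : Word.equiv (of h) = W := by rw [← heq, ← hWprod, equiv_prod]
  have hlen := congrArg (fun w : Word G => w.toList.length) hWe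
  have h1 := length_equiv_of i h
  simp only [W] at hlen
  rw [List.length_append, List.length_cons, List.length_map, List.length_reverse] at hlen
  have : 1 ≤ w.toList.length := List.length_pos_iff.mpr hne
  omega

theorem key (i : ι) : ∀ n : ℕ, ∀ z : CoprodI G, (Word.equiv z).toList.length ≤ n →
    ∀ g h : G i, g ≠ 1 → z * of g * z⁻¹ = of h → z ∈ (of (i := i) (M := G)).range := by
  intro n
  induction n with
  | zero =>
    intro z hlen g h hg heq
    have hz : z = 1 := by
      rw [← prod_equiv z]
      have : (Word.equiv z).toList = [] := List.length_eq_zero_iff.mp (Nat.le_zero.mp hlen)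
      rw [Word.prod, this]
      simp
    exact hz ▸ one_mem _
  | succ n ih =>
    intro z hlen g h hg heq
    match hl : (Word.equiv z).toList.getLast? with
    | none =>
      have hz : z = 1 := by
        rw [← prod_equiv z, Word.prod, List.getLast?_eq_none_iff.mp hl]
        simp
      exact hz ▸ one_mem _
    | some l =>
      by_cases hli : l.1 = i
      · obtain ⟨k, a⟩ := l
        dsimp only at hli
        subst hli
        obtain ⟨t, ht⟩ := List.getLast?_eq_some_iff.mp hl
        have htpre : t <+: (Word.equiv z).toList := ⟨[⟨k, a⟩], ht.symm⟩
        let w' : Word G :=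
          ⟨t, fun x hx => (Word.equiv z).ne_one x (htpre.sublist.mem hx),
            (Word.equiv z).chain_ne.prefix htpre⟩
        have hzsplit : z = w'.prod * of a := by
          conv_lhs => rw [← prod_equiv z]
          rw [Word.prod, ht, List.map_append, List.prod_append]
          simp [Word.prod, w']
        have ha : a ≠ 1 := (Word.equiv z).ne_one ⟨k, a⟩ (ht ▸ List.mem_append_right _ (by simp))
        have hag : a * g * a⁻¹ ≠ 1 := by
          intro hc
          apply hg
          have := congrArg (fun x => a⁻¹ * x * a) hc
          simpa [mul_assoc] using this
        have heq' : w'.prod * of (a * g * a⁻¹) * w'.prod⁻¹ = of h := by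
          rw [← heq, hzsplit]
          simp only [map_mul, map_inv, mul_inv_rev]
          group
        have hlen' : (Word.equiv w'.prod).toList.length ≤ n := by
          rw [equiv_prod]
          show t.length ≤ n
          have := congrArg List.length ht
          rw [List.length_append] at this
          simp only [List.length_cons, List.length_nil] at this
          omega
        obtain ⟨b, hb⟩ := ih w'.prod hlen' (a * g * a⁻¹) h hag heq'
        exact ⟨b * a, by rw [map_mul, hb, hzsplit]⟩
      · exact absurd heq (by
          rw [← prod_equiv z]
          exact fun heq' => not_of_conj _ hl hli g hg h heq')

theorem key' (i : ι) (z : CoprodI G) (g h : G i) (hg : g ≠ 1)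
    (heq : z * of g * z⁻¹ = of h) : z ∈ (of (i := i) (M := G)).range :=
  key i (Word.equiv z).toList.length z le_rfl g h hg heq

section transfer

universe u v

variable (A : Type u) (B : Type v) [Group A] [Group B]

/-- The `Bool`-indexed family `⟨A, B⟩` (lifted to a common universe). -/
abbrev F : Bool → Type (max u v) := fun b => Bool.rec (ULift.{u} B) (ULift.{v} A) b

instance : ∀ b, Group (F A B b) :=
  fun b => Bool.rec (inferInstanceAs (Group (ULift B))) (inferInstanceAs (Group (ULift A))) b

/-- Map from the binary coproduct to the indexed coproduct. -/
def e : Coprod A B →* CoprodI (F A B) :=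
  Coprod.lift
    ((CoprodI.of (i := true)).comp (MulEquiv.ulift.symm.toMonoidHom : A →* ULift A))
    ((CoprodI.of (i := false)).comp (MulEquiv.ulift.symm.toMonoidHom : B →* ULift B))

/-- Map from the indexed coproduct to the binary coproduct. -/
def f : CoprodI (F A B) →* Coprod A B :=
  CoprodI.lift (fun b => Bool.rec
    ((Coprod.inr : B →* Coprod A B).comp (MulEquiv.ulift.toMonoidHom : ULift B →* B))
    ((Coprod.inl : A →* Coprod A B).comp (MulEquiv.ulift.toMonoidHom : ULift A →* A)) b)

theorem f_comp_e : (f A B).comp (e A B) = MonoidHom.id _ := by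
  apply Coprod.hom_ext
  · ext x
    simp [e, f, Coprod.lift_apply_inl, CoprodI.lift_of]
  · ext x
    simp [e, f, Coprod.lift_apply_inr, CoprodI.lift_of]

theorem e_inj : Function.Injective (e A B) :=
  Function.LeftInverse.injective (g := f A B)
    (fun x => DFunLike.congr_fun (f_comp_e A B) x)

theorem e_inl (g : A) :
    e A B (Coprod.inl g) = CoprodI.of (i := true) (ULift.up g : F A B true) :=
  Coprod.lift_apply_inl _ _ g

end transfer

end Stmt1Aux

/-- `G` is a malnormal subgroup of the free product `G ∗ K`:
for every `z ∈ G ∗ K` with `z ∉ G`, we have `z G z⁻¹ ∩ G = {e}`. -/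
theorem stmt1 {G K : Type*} [Group G] [Group K] (z : Monoid.Coprod G K)
    (hz : z ∉ (Monoid.Coprod.inl : G →* Monoid.Coprod G K).range) :
    ((Monoid.Coprod.inl : G →* Monoid.Coprod G K).range.map (MulAut.conj z).toMonoidHom ⊓
        (Monoid.Coprod.inl : G →* Monoid.Coprod G K).range) = ⊥ := by
  classical
  rw [eq_bot_iff]
  intro x hx
  have hx1 : x ∈ ((Monoid.Coprod.inl : G →* Monoid.Coprod G K).range.map
      (MulAut.conj z).toMonoidHom) := hx.1
  have hx2 : x ∈ (Monoid.Coprod.inl : G →* Monoid.Coprod G K).range := hx.2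
  rw [Subgroup.mem_map] at hx1
  obtain ⟨y, hy, rfl⟩ := hx1
  obtain ⟨g, rfl⟩ := hy
  obtain ⟨g', hg'⟩ := hx2
  by_cases hg1 : g = 1
  · subst hg1
    simp only [map_one, Subgroup.mem_bot]
  · exfalso
    apply hz
    have heq : z * Monoid.Coprod.inl g * z⁻¹ = Monoid.Coprod.inl g' := by
      simpa [MulAut.conj_apply, mul_assoc] using hg'.symm
    letI : ∀ b, DecidableEq (Stmt1Aux.F G K b) := fun b => Classical.decEq _
    have hup : (ULift.up g : Stmt1Aux.F G K true) ≠ 1 :=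
      fun hc => hg1 (congrArg ULift.down hc)
    have heq2 : (Stmt1Aux.e G K) z * Monoid.CoprodI.of (i := true)
          (ULift.up g : Stmt1Aux.F G K true) * ((Stmt1Aux.e G K) z)⁻¹
        = Monoid.CoprodI.of (i := true) (ULift.up g' : Stmt1Aux.F G K true) := by
      have h2 := congrArg (Stmt1Aux.e G K) heq
      simpa only [map_mul, map_inv, Stmt1Aux.e_inl, mul_assoc] using h2
    obtain ⟨b, hb⟩ := @Stmt1Aux.key' Bool instDecidableEqBool (Stmt1Aux.F G K) _ _ true ((Stmt1Aux.e G K) z) (ULift.up g) (ULift.up g') hup heq2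
    refine ⟨b.down, Stmt1Aux.e_inj G K ?_⟩
    rw [Stmt1Aux.e_inl]
    exact hb
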